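/- Let N ≥ 2, 1 < pᵢ < 2 for all i, with p̄ > 2N/(N+1), and let α, σᵢ be the self-similar exponents. Set m = minᵢ{σᵢ pᵢ/(2−pᵢ)} (so m > 1). If 0 < γᵢ ≤ [ (α/N)(m−1) · 1/(2(pᵢ−1)) · (pᵢ/(2−pᵢ))^{−pᵢ} ]^{1/(2−pᵢ)} for each i, then the function F̄(y) = (∑ᵢ γᵢ|yᵢ|^{pᵢ/(2−pᵢ)})^{−1} satisfies ∑ᵢ[(|F̄_{yᵢ}|^{pᵢ−2}F̄_{yᵢ})_{yᵢ} + ασᵢ(yᵢF̄)_{yᵢ}] ≤ 0 at every point y with all coordinates nonzero. -/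

import Mathlib

/-- Derivative of |s|^a away from 0. -/
lemma habs (a : ℝ) {t : ℝ} (ht : t ≠ 0) :
    HasDerivAt (fun s : ℝ => |s| ^ a) (a * |t| ^ (a - 2) * t) t := by
  rcases lt_or_gt_of_ne ht with h | h
  · have key : HasDerivAt (fun s : ℝ => (-s) ^ a) (a * (-t) ^ (a-1) * (-1)) t := by
      have := (Real.hasDerivAt_rpow_const (x := -t) (p := a) (Or.inl (by linarith)))
      exact this.comp t (hasDerivAt_neg t)
    have heq : (fun s : ℝ => |s| ^ a) =ᶠ[nhds t] (fun s : ℝ => (-s) ^ a) := by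
      filter_upwards [eventually_lt_nhds h] with s hs
      rw [abs_of_neg hs]
    have := key.congr_of_eventuallyEq heq
    refine this.congr_deriv ?_
    symm
    rw [abs_of_neg h]
    rw [show a - 1 = (a-2) + 1 by ring, Real.rpow_add (by linarith) (a-2) 1, Real.rpow_one]
    ring
  · have key : HasDerivAt (fun s : ℝ => s ^ a) (a * t ^ (a-1)) t :=
      Real.hasDerivAt_rpow_const (Or.inl (ne_of_gt h))
    have heq : (fun s : ℝ => |s| ^ a) =ᶠ[nhds t] (fun s : ℝ => s ^ a) := by
      filter_upwards [eventually_gt_nhds h] with s hs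
      rw [abs_of_pos hs]
    have := key.congr_of_eventuallyEq heq
    refine this.congr_deriv ?_
    symm
    rw [abs_of_pos h, show a - 1 = (a-2) + 1 by ring, Real.rpow_add h (a-2) 1, Real.rpow_one]
    ring

lemma habs_mul (a : ℝ) {t : ℝ} (ht : t ≠ 0) :
    HasDerivAt (fun s : ℝ => |s| ^ a * s) ((a + 1) * |t| ^ a) t := by
  have := (habs a ht).mul (hasDerivAt_id t)
  refine this.congr_deriv ?_
  have h2 : |t| ^ (a-2) * t * t = |t| ^ a := by
    rw [show (a:ℝ) = (a-2) + 2 by ring, Real.rpow_add (abs_pos.mpr ht) (a-2) 2]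
    rw [show ((a-2)+2) - 2 = a - 2 by ring]
    rw [Real.rpow_two, sq_abs]
    ring
  symm
  calc (a+1) * |t| ^ a = a * (|t| ^ (a-2) * t * t) + |t| ^ a := by rw [h2]; ring
    _ = a * |t| ^ (a - 2) * t * id t + |t| ^ a * 1 := by simp [id]; ring

lemma coord_main (p γ A K B t : ℝ) (hp1 : 1 < p) (hp2 : p < 2) (hγ : 0 < γ)
    (hA : 0 < A) (ht : t ≠ 0)
    (hB : 2*(p-1)*(p/(2-p))^p * γ^(2-p) ≤ B) :
    ∃ D, HasDerivAt (fun s => |deriv (fun u => (A + γ*|u|^(p/(2-p)))⁻¹) s| ^ (p-2) *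
           deriv (fun u => (A + γ*|u|^(p/(2-p)))⁻¹) s + K * (s * (A + γ*|s|^(p/(2-p)))⁻¹)) D t
      ∧ D ≤ B / (A + γ*|t|^(p/(2-p))) + K / (A + γ*|t|^(p/(2-p)))
            - K*(γ*(p/(2-p))*|t|^(p/(2-p))) / (A + γ*|t|^(p/(2-p)))^2 := by
  have h2p : (0:ℝ) < 2 - p := by linarith
  set q : ℝ := p/(2-p) with hqdef
  have hq1 : 1 < q := by
    rw [hqdef, lt_div_iff₀ h2p]; linarith
  have hq0 : 0 < q := by linarith
  set c : ℝ := γ * q with hcdef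
  have hc0 : 0 < c := mul_pos hγ hq0
  set e : ℝ := (q-1)*(p-1) with hedef
  have he0 : 0 < e := mul_pos (by linarith) (by linarith)
  set S : ℝ → ℝ := fun s => A + γ*|s|^q with hSdef
  have hSpos : ∀ s, 0 < S s := fun s =>
    add_pos_of_pos_of_nonneg hA (mul_nonneg hγ.le (Real.rpow_nonneg (abs_nonneg s) q))
  have hS : ∀ s : ℝ, s ≠ 0 → HasDerivAt S (γ*(q*|s|^(q-2)*s)) s := fun s hs =>
    ((habs q hs).const_mul γ).const_add A
  have hg : ∀ s : ℝ, s ≠ 0 →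
      HasDerivAt (fun u => (S u)⁻¹) (-(γ*(q*|s|^(q-2)*s)) / (S s)^2) s := fun s hs =>
    (hS s hs).inv (ne_of_gt (hSpos s))
  have hderiv : ∀ s : ℝ, s ≠ 0 →
      deriv (fun u => (A + γ*|u|^q)⁻¹) s = -(γ*(q*|s|^(q-2)*s)) / (S s)^2 := fun s hs =>
    (hg s hs).deriv
  have hident : ∀ s : ℝ, s ≠ 0 →
      |(-(γ*(q*|s|^(q-2)*s)) / (S s)^2)| ^ (p-2) * (-(γ*(q*|s|^(q-2)*s)) / (S s)^2)
        = -(c^(p-1)) * (|s|^(e-1)*s) * (S s)^(-(2*(p-1))) := by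
    intro s hs
    have habs0 : (0:ℝ) < |s| := abs_pos.mpr hs
    set X : ℝ := c * |s|^(q-1) * (S s)^(-(2:ℝ)) with hXdef
    have hX0 : 0 < X := by
      apply mul_pos (mul_pos hc0 (Real.rpow_pos_of_pos habs0 _))
      exact Real.rpow_pos_of_pos (hSpos s) _
    have hSrw : (S s)^(-(2:ℝ)) = ((S s)^2)⁻¹ := by
      rw [Real.rpow_neg (hSpos s).le, Real.rpow_two]
    have hφ : (-(γ*(q*|s|^(q-2)*s)) / (S s)^2) = -X * (s / |s|) := by
      rw [hXdef, hSrw]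
      have hq' : |s|^(q-1) = |s|^(q-2) * |s| := by
        rw [show q - 1 = (q-2) + 1 by ring, Real.rpow_add habs0, Real.rpow_one]
      rw [hq']
      have hS2 : (S s)^2 ≠ 0 := pow_ne_zero 2 (ne_of_gt (hSpos s))
      field_simp
      ring
    have habsφ : |(-(γ*(q*|s|^(q-2)*s)) / (S s)^2)| = X := by
      rw [hφ, abs_mul, abs_neg, abs_of_pos hX0, abs_div, abs_abs,
        div_self (ne_of_gt habs0), mul_one]
    rw [habsφ, hφ]
    have hXp : X ^ (p-2) * (-X * (s/|s|)) = -(X ^ (p-1)) * (s/|s|) := by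
      have h1 : X ^ (p-2) * X = X ^ (p-1) := by
        nth_rewrite 2 [show X = X ^ (1:ℝ) from (Real.rpow_one X).symm]
        rw [← Real.rpow_add hX0, show p-2+1 = p-1 by ring]
      calc X ^ (p-2) * (-X * (s/|s|)) = -(X^(p-2)*X) * (s/|s|) := by ring
        _ = -(X ^ (p-1)) * (s/|s|) := by rw [h1]
    rw [hXp]
    have hXval : X ^ (p-1) = c^(p-1) * |s|^e * (S s)^(-(2*(p-1))) := by
      rw [hXdef, Real.mul_rpow (mul_pos hc0 (Real.rpow_pos_of_pos habs0 _)).le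
        (Real.rpow_pos_of_pos (hSpos s) _).le,
        Real.mul_rpow hc0.le (Real.rpow_pos_of_pos habs0 _).le,
        ← Real.rpow_mul habs0.le, ← Real.rpow_mul (hSpos s).le, ← hedef,
        show (-2:ℝ)*(p-1) = -(2*(p-1)) by ring]
    rw [hXval]
    have h5 : |s|^(e-1) * s = |s|^e * (s/|s|) := by
      rw [show e = (e-1)+1 by ring, Real.rpow_add habs0, Real.rpow_one]
      field_simp
      ring
    rw [h5]; ring
  -- assemble the derivative
  have habs0 : (0:ℝ) < |t| := abs_pos.mpr ht
  have hT : 0 < S t := hSpos t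
  have h1 := habs_mul (e-1) ht
  have h2 : HasDerivAt (fun s => (S s)^(-(2*(p-1))))
      ((γ*(q*|t|^(q-2)*t)) * (-(2*(p-1))) * (S t)^(-(2*(p-1))-1)) t :=
    (hS t ht).rpow_const (Or.inl (ne_of_gt hT))
  have hH1 := (h1.mul h2).const_mul (-(c^(p-1)))
  have h4 := ((hasDerivAt_id t).mul (hg t ht)).const_mul K
  have hH := hH1.add h4
  refine ⟨_, hH.congr_of_eventuallyEq ?_, ?_⟩
  · filter_upwards [eventually_ne_nhds ht] with s hs
    rw [hderiv s hs, hident s hs]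
    show _ = -(c^(p-1)) * ((|s|^(e-1)*s) * (S s)^(-(2*(p-1)))) + K * (s * (S s)⁻¹)
    simp only [hSdef]
    ring
  · -- the bound
    simp only [hSdef, id_eq]
    set T := A + γ*|t|^q with hTdef
    have hT0 : 0 < T := hT
    have hq2 : |t| ^ (q-2) * t * t = |t| ^ q := by
      rw [show (q:ℝ) = (q-2) + 2 by ring, Real.rpow_add habs0 (q-2) 2,
        show ((q-2)+2) - 2 = q - 2 by ring, Real.rpow_two, sq_abs]
      ring
    have hcross : |t|^(e-1) * t * (|t|^(q-2) * t) = |t|^(e+q-1) := by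
      rw [show e+q-1 = (e-1)+((q-2)+2) by ring, Real.rpow_add habs0, Real.rpow_add habs0,
        Real.rpow_two, sq_abs]
      ring
    have hcp : c^(p-1) * c = c^p := by
      nth_rewrite 2 [show c = c ^ (1:ℝ) from (Real.rpow_one c).symm]
      rw [← Real.rpow_add hc0, show p-1+1 = p by ring]
    have hD : -(c^(p-1)) * ((e-1+1) * |t|^(e-1) * T^(-(2*(p-1))) + (|t|^(e-1)*t) * ((γ*(q*|t|^(q-2)*t)) * (-(2*(p-1))) * T^(-(2*(p-1))-1))) + K * (1 * T⁻¹ + t * (-(γ*(q*|t|^(q-2)*t)) / T^2))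
        = (-(c^(p-1) * ((e-1+1) * |t|^(e-1)) * T^(-(2*(p-1))))
          + 2*(p-1) * c^p * (|t|^(e+q-1) * T^(-(2*(p-1))-1)))
          + (K / T - K*(γ*(q*|t|^q)) / T^2) := by
      rw [← hcp, ← hcross, ← hq2]
      field_simp
      ring
    have hA1 : -(c^(p-1) * ((e-1+1) * |t|^(e-1)) * T^(-(2*(p-1)))) ≤ 0 := by
      have he' : (0:ℝ) ≤ e - 1 + 1 := by linarith
      have h0 : (0:ℝ) ≤ c^(p-1) * ((e-1+1) * |t|^(e-1)) * T^(-(2*(p-1))) :=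
        mul_nonneg (mul_nonneg (Real.rpow_nonneg hc0.le _)
          (mul_nonneg he' (Real.rpow_nonneg (abs_nonneg t) _)))
          (Real.rpow_nonneg hT0.le _)
      linarith
    have hmono : T^(-(2*p-2)) ≤ (γ*|t|^q)^(-(2*p-2)) := by
      apply Real.rpow_le_rpow_of_nonpos (mul_pos hγ (Real.rpow_pos_of_pos habs0 q))
      · exact le_add_of_nonneg_left hA.le
      · linarith
    have hsplit : T^(-(2*(p-1))-1) = T^(-(2*p-2)) * T⁻¹ := by
      rw [show -(2*(p-1))-1 = (-(2*p-2)) + (-1) by ring, Real.rpow_add hT0, Real.rpow_neg_one]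
    have hprod : (γ*|t|^q)^(-(2*p-2)) = γ^(-(2*p-2)) * |t|^(q*(-(2*p-2))) := by
      rw [Real.mul_rpow hγ.le (Real.rpow_nonneg (abs_nonneg t) q), ← Real.rpow_mul (abs_nonneg t)]
    have hexp : e+q-1 + q*(-(2*p-2)) = 0 := by
      rw [hedef, hqdef]; field_simp; ring
    have hcomb : |t|^(e+q-1) * |t|^(q*(-(2*p-2))) = 1 := by
      rw [← Real.rpow_add habs0, hexp, Real.rpow_zero]
    have hgam : c^p * γ^(-(2*p-2)) = q^p * γ^(2-p) := by
      rw [hcdef, Real.mul_rpow hγ.le hq0.le]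
      rw [mul_comm (γ^p) (q^p), mul_assoc, ← Real.rpow_add hγ, show p + -(2*p-2) = 2-p by ring]
    have hA2 : 2*(p-1) * c^p * (|t|^(e+q-1) * T^(-(2*(p-1))-1)) ≤ B / T := by
      have hfac : (0:ℝ) ≤ 2*(p-1) * c^p :=
        mul_nonneg (by linarith) (Real.rpow_nonneg hc0.le _)
      have step : |t|^(e+q-1) * T^(-(2*(p-1))-1)
          ≤ |t|^(e+q-1) * ((γ*|t|^q)^(-(2*p-2)) * T⁻¹) := by
        rw [hsplit]
        exact mul_le_mul_of_nonneg_left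
          (mul_le_mul_of_nonneg_right hmono (inv_nonneg.mpr hT0.le))
          (Real.rpow_nonneg (abs_nonneg t) _)
      have hval : 2*(p-1)*c^p * (|t|^(e+q-1) * ((γ*|t|^q)^(-(2*p-2)) * T⁻¹))
          = 2*(p-1)*(q^p*γ^(2-p)) * T⁻¹ := by
        rw [hprod]
        calc 2*(p-1)*c^p * (|t|^(e+q-1) * (γ^(-(2*p-2)) * |t|^(q*(-(2*p-2))) * T⁻¹))
            = 2*(p-1) * (c^p * γ^(-(2*p-2))) * (|t|^(e+q-1) * |t|^(q*(-(2*p-2)))) * T⁻¹ := by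
              ring
          _ = 2*(p-1)*(q^p*γ^(2-p)) * T⁻¹ := by rw [hcomb, hgam]; ring
      calc 2*(p-1) * c^p * (|t|^(e+q-1) * T^(-(2*(p-1))-1))
          ≤ 2*(p-1)*c^p * (|t|^(e+q-1) * ((γ*|t|^q)^(-(2*p-2)) * T⁻¹)) :=
            mul_le_mul_of_nonneg_left step hfac
        _ = 2*(p-1)*(q^p*γ^(2-p)) * T⁻¹ := hval
        _ ≤ B / T := by
            rw [div_eq_mul_inv]
            apply mul_le_mul_of_nonneg_right _ (inv_nonneg.mpr hT0.le)
            calc 2*(p-1)*(q^p*γ^(2-p)) = 2*(p-1)*q^p*γ^(2-p) := by ring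
              _ ≤ B := hB
    rw [hD, show K * (c * |t| ^ q) / T^2 = K * (γ * (q * |t| ^ q)) / T^2 by rw [hcdef]; ring]
    linarith [hA1, hA2]

/-- Partial derivative along the i-th coordinate direction. -/
noncomputable def pderiv' (N : ℕ) (i : Fin N) (u : (Fin N → ℝ) → ℝ) (y : Fin N → ℝ) : ℝ :=
  deriv (fun t => u (Function.update y i t)) (y i)

/-- The anisotropic upper barrier F̄(y) = (∑ᵢ γᵢ|yᵢ|^{pᵢ/(2−pᵢ)})⁻¹ is a classical
    supersolution of the stationary profile equation away from the coordinate hyperplanes. -/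
theorem stmt8 (N : ℕ) (hN : 2 ≤ N) (p σ γ : Fin N → ℝ) (pbar α m : ℝ)
    (hp1 : ∀ i, 1 < p i) (hp2 : ∀ i, p i < 2)
    (hpbar : 1 / pbar = (1 / (N : ℝ)) * ∑ i, 1 / p i)
    (hpc : 2 * N / ((N : ℝ) + 1) < pbar)
    (hα : α = (N : ℝ) / ((N : ℝ) * pbar - 2 * N + pbar))
    (hσ : ∀ i, σ i = ((N : ℝ) + 1) * pbar / ((N : ℝ) * p i) - 1)
    (hm_le : ∀ i, m ≤ σ i * p i / (2 - p i))
    (hm_mem : ∃ i, m = σ i * p i / (2 - p i))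
    (hγpos : ∀ i, 0 < γ i)
    (hγ : ∀ i, γ i ≤
      ((α / N) * (m - 1) * (1 / (2 * (p i - 1))) * (p i / (2 - p i)) ^ (-(p i)))
        ^ (1 / (2 - p i)))
    (F : (Fin N → ℝ) → ℝ)
    (hF : F = fun y => (∑ i, γ i * |y i| ^ (p i / (2 - p i)))⁻¹) :
    ∀ y : Fin N → ℝ, (∀ i, y i ≠ 0) →
      (∑ i, pderiv' N i
        (fun z => |pderiv' N i F z| ^ (p i - 2) * pderiv' N i F z + α * σ i * (z i * F z)) y)
        ≤ 0 := by
  -- global positivity facts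
  have hN2 : (2:ℝ) ≤ (N:ℝ) := by exact_mod_cast hN
  have hNpos : (0:ℝ) < N := by linarith
  have hNne : (N:ℝ) ≠ 0 := ne_of_gt hNpos
  have hpbarpos : 0 < pbar := lt_trans (by positivity) hpc
  have hpbarne : pbar ≠ 0 := ne_of_gt hpbarpos
  have hkey : 2 * (N:ℝ) < ((N:ℝ)+1) * pbar := by
    rw [div_lt_iff₀ (by positivity : (0:ℝ) < (N:ℝ)+1)] at hpc
    linarith
  have hαpos : 0 < α := by
    rw [hα]; apply div_pos hNpos; linarith
  have hSig : (∑ i, 1/p i) = (N:ℝ)/pbar := by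
    rw [eq_div_iff hpbarne]
    field_simp at hpbar
    linarith
  have hσsum : ∑ i, σ i = 1 := by
    have hrw : ∀ i, σ i = ((N:ℝ)+1)*pbar/(N:ℝ) * (1/p i) - 1 := by
      intro i
      rw [hσ i]
      have : p i ≠ 0 := ne_of_gt (by linarith [hp1 i])
      field_simp
    calc ∑ i, σ i = ∑ i, (((N:ℝ)+1)*pbar/(N:ℝ) * (1/p i) - 1) :=
          Finset.sum_congr rfl (fun i _ => hrw i)
      _ = ((N:ℝ)+1)*pbar/(N:ℝ) * (∑ i, 1/p i) - N := by
          rw [Finset.sum_sub_distrib, ← Finset.mul_sum]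
          simp [Finset.card_univ]
      _ = 1 := by rw [hSig]; field_simp; ring
  have hm1 : 1 < m := by
    obtain ⟨i0, hi0⟩ := hm_mem
    have h2P : (0:ℝ) < 2 - p i0 := by linarith [hp2 i0]
    have hPpos : (0:ℝ) < p i0 := by linarith [hp1 i0]
    rw [hi0, hσ i0, lt_div_iff₀ h2P]
    have hNP : (0:ℝ) < (N:ℝ) * p i0 := by positivity
    have hrw : (((N:ℝ)+1)*pbar/((N:ℝ)*p i0) - 1) * p i0 = ((N:ℝ)+1)*pbar/(N:ℝ) - p i0 := by
      field_simp
    rw [hrw]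
    have : 2 < ((N:ℝ)+1)*pbar/(N:ℝ) := by rw [lt_div_iff₀ hNpos]; linarith
    linarith
  -- start
  intro y hy
  set T : ℝ := ∑ j, γ j * |y j| ^ (p j / (2 - p j)) with hTdef
  have htermpos : ∀ j, 0 < γ j * |y j| ^ (p j / (2 - p j)) := fun j =>
    mul_pos (hγpos j) (Real.rpow_pos_of_pos (abs_pos.mpr (hy j)) _)
  have hTpos : 0 < T :=
    Finset.sum_pos (fun j _ => htermpos j) ⟨⟨0, by omega⟩, Finset.mem_univ _⟩
  set A : Fin N → ℝ := fun i => ∑ j ∈ Finset.univ \ {i}, γ j * |y j| ^ (p j / (2 - p j))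
    with hAdef
  have hApos : ∀ i, 0 < A i := by
    intro i
    apply Finset.sum_pos (fun j _ => htermpos j)
    rw [← Finset.card_pos, Finset.card_sdiff_of_subset (Finset.subset_univ {i})]
    simp only [Finset.card_univ, Fintype.card_fin, Finset.card_singleton]
    omega
  have hAT : ∀ i, A i + γ i * |y i| ^ (p i / (2 - p i)) = T :=
    fun i => (Finset.sum_eq_sum_sdiff_singleton_add (Finset.mem_univ i) _).symm
  have hrepr : ∀ i (x : ℝ), F (Function.update y i x)
      = (A i + γ i * |x| ^ (p i / (2 - p i)))⁻¹ := by
    intro i x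
    rw [hF]
    simp only
    congr 1
    rw [Finset.sum_eq_sum_sdiff_singleton_add (Finset.mem_univ i)
      (fun j => γ j * |Function.update y i x j| ^ (p j / (2 - p j)))]
    rw [Function.update_self]
    rw [Finset.sum_congr rfl (fun j hj => by
      rw [Function.update_of_ne (Finset.notMem_singleton.mp (Finset.mem_sdiff.mp hj).2)])]
  have hpd : ∀ i (x : ℝ), pderiv' N i F (Function.update y i x)
      = deriv (fun u => (A i + γ i * |u| ^ (p i / (2 - p i)))⁻¹) x := by
    intro i x
    unfold pderiv'
    simp only [Function.update_idem, Function.update_self]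
    congr 1
    funext s
    exact hrepr i s
  have hfun : ∀ i, (fun x : ℝ =>
        |pderiv' N i F (Function.update y i x)| ^ (p i - 2) *
          pderiv' N i F (Function.update y i x)
          + α * σ i * (Function.update y i x i * F (Function.update y i x)))
      = (fun x : ℝ => |deriv (fun u => (A i + γ i*|u|^(p i/(2-p i)))⁻¹) x| ^ (p i - 2) *
           deriv (fun u => (A i + γ i*|u|^(p i/(2-p i)))⁻¹) x
           + (α * σ i) * (x * (A i + γ i*|x|^(p i/(2-p i)))⁻¹)) := by
    intro i
    funext x
    simp only [Function.update_self]
    rw [hpd i x, hrepr i x]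
  -- γ condition per coordinate
  have hBcond : ∀ i, 2*(p i-1)*(p i/(2-p i))^(p i) * (γ i)^(2-p i) ≤ α/(N:ℝ)*(m-1) := by
    intro i
    have hp1i := hp1 i; have hp2i := hp2 i
    have h2p : (0:ℝ) < 2 - p i := by linarith
    have hq0 : (0:ℝ) < p i / (2 - p i) := by positivity
    set Bb : ℝ := (α / N) * (m - 1) * (1 / (2 * (p i - 1))) * (p i / (2 - p i)) ^ (-(p i))
      with hBbdef
    have hBb0 : 0 < Bb := by
      apply mul_pos (mul_pos (mul_pos (by positivity) (by linarith))
        (one_div_pos.mpr (by linarith)))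
      exact Real.rpow_pos_of_pos hq0 _
    have hγ2p : (γ i)^(2-p i) ≤ Bb := by
      calc (γ i)^(2-p i) ≤ (Bb^(1/(2-p i)))^(2-p i) :=
            Real.rpow_le_rpow (hγpos i).le (hγ i) (by linarith)
        _ = Bb := by
            rw [← Real.rpow_mul hBb0.le, one_div_mul_cancel (ne_of_gt h2p), Real.rpow_one]
    have hqq : (p i/(2-p i))^(p i) * (p i/(2-p i))^(-(p i)) = 1 := by
      rw [← Real.rpow_add hq0]; simp
    calc 2*(p i-1)*(p i/(2-p i))^(p i) * (γ i)^(2-p i)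
        ≤ 2*(p i-1)*(p i/(2-p i))^(p i) * Bb := by
          apply mul_le_mul_of_nonneg_left hγ2p
          have := Real.rpow_nonneg hq0.le (p i)
          nlinarith
      _ = (α/N)*(m-1) * ((2*(p i-1)) * (1/(2*(p i-1)))) *
            ((p i/(2-p i))^(p i) * (p i/(2-p i))^(-(p i))) := by rw [hBbdef]; ring
      _ = α/(N:ℝ)*(m-1) := by
          rw [hqq, mul_one, mul_one_div, div_self (ne_of_gt (by linarith : (0:ℝ) < 2*(p i-1))), mul_one]
  -- per-coordinate bound
  have hsummand : ∀ i, pderiv' N i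
      (fun z => |pderiv' N i F z| ^ (p i - 2) * pderiv' N i F z + α * σ i * (z i * F z)) y
      ≤ α/(N:ℝ)*(m-1) / T + (α * σ i) / T
        - (α * σ i)*(γ i*(p i/(2-p i))*|y i|^(p i/(2-p i))) / T^2 := by
    intro i
    obtain ⟨D, hD, hDle⟩ := coord_main (p i) (γ i) (A i) (α * σ i) (α/(N:ℝ)*(m-1)) (y i)
      (hp1 i) (hp2 i) (hγpos i) (hApos i) (hy i) (hBcond i)
    have hval : pderiv' N i
        (fun z => |pderiv' N i F z| ^ (p i - 2) * pderiv' N i F z + α * σ i * (z i * F z)) y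
        = D := by
      show deriv (fun x : ℝ =>
        |pderiv' N i F (Function.update y i x)| ^ (p i - 2) *
          pderiv' N i F (Function.update y i x)
          + α * σ i * (Function.update y i x i * F (Function.update y i x))) (y i) = D
      rw [hfun i]
      exact hD.deriv
    rw [hval]
    rw [hAT i] at hDle
    exact hDle
  -- sum it up
  have hTne : T ≠ 0 := ne_of_gt hTpos
  have hT2 : (0:ℝ) < T^2 := by positivity
  refine le_trans (Finset.sum_le_sum (fun i (_ : i ∈ Finset.univ) => hsummand i)) ?_
  have h3 : α*m/T ≤ ∑ i, (α * σ i)*(γ i*(p i/(2-p i))*|y i|^(p i/(2-p i))) / T^2 := by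
    have hterm : ∀ i ∈ Finset.univ, α*m*(γ i*|y i|^(p i/(2-p i)))/T^2
        ≤ (α * σ i)*(γ i*(p i/(2-p i))*|y i|^(p i/(2-p i))) / T^2 := by
      intro i _
      have hq : m ≤ σ i * (p i/(2-p i)) := by
        have := hm_le i; rwa [mul_div_assoc] at this
      have hX : (0:ℝ) ≤ γ i*|y i|^(p i/(2-p i)) := (htermpos i).le
      have hmono' : α*m*(γ i*|y i|^(p i/(2-p i)))
          ≤ (α * σ i)*(γ i*(p i/(2-p i))*|y i|^(p i/(2-p i))) := by
        calc α*m*(γ i*|y i|^(p i/(2-p i)))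
            ≤ α*(σ i * (p i/(2-p i)))*(γ i*|y i|^(p i/(2-p i))) :=
              mul_le_mul_of_nonneg_right (mul_le_mul_of_nonneg_left hq hαpos.le) hX
          _ = (α * σ i)*(γ i*(p i/(2-p i))*|y i|^(p i/(2-p i))) := by ring
      gcongr
    calc α*m/T = ∑ i, α*m*(γ i*|y i|^(p i/(2-p i)))/T^2 := by
          rw [← Finset.sum_div, ← Finset.mul_sum, ← hTdef, sq]
          field_simp
      _ ≤ _ := Finset.sum_le_sum hterm
  have h2 : ∑ i, (α * σ i)/T = α/T := by
    rw [← Finset.sum_div, ← Finset.mul_sum, hσsum, mul_one]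
  have hsplit : ∑ i, (α/(N:ℝ)*(m-1) / T + (α * σ i) / T
      - (α * σ i)*(γ i*(p i/(2-p i))*|y i|^(p i/(2-p i))) / T^2)
      = (N:ℝ)*(α/(N:ℝ)*(m-1)/T) + α/T
        - ∑ i, (α * σ i)*(γ i*(p i/(2-p i))*|y i|^(p i/(2-p i))) / T^2 := by
    rw [Finset.sum_sub_distrib, Finset.sum_add_distrib, Finset.sum_const,
      Finset.card_univ, Fintype.card_fin, nsmul_eq_mul, h2]
  rw [hsplit]
  have hNB : (N:ℝ)*(α/(N:ℝ)*(m-1)/T) = α*(m-1)/T := by field_simp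
  have hzero : α*(m-1)/T + α/T - α*m/T = 0 := by field_simp; ring
  rw [hNB]
  linarith
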